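/- Let ν be a Borel measure on ℝ which is absolutely continuous with respect to Lebesgue measure with a density u satisfying u(x) ≤ C for all x ∈ ℝ, where C < ∞. Define u_1 := u and, inductively, u_{k+1}(x) := ∫_ℝ u(y) u_k(x − y) dy. Then for every integer k ≥ 1 the function u_k is a density of the k-fold convolution power ν^{∗k}, and it satisfies, for every x ∈ ℝ (with values in [0,∞]), u_k(x) ≤ k C ν^{∗(k−1)}(( min{0,x}, ∞)), where for k = 1 the right-hand side is interpreted with the convention ν^{∗0}-factor equal to 1, i.e. u_1(x) ≤ C. -/

import Mathlib

open MeasureTheory Set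
open scoped ENNReal

/-- The `k`-fold convolution power of a measure on `ℝ` (with `ν^{*0} = δ_0`). -/
noncomputable def convPow (ν : Measure ℝ) : ℕ → Measure ℝ
  | 0 => Measure.dirac 0
  | k + 1 => (convPow ν k).conv ν

/-- The iterated convolution densities: `iterDens u k` is `u_{k+1}`, where `u_1 = u` and
`u_{k+1}(x) = ∫ u(y) u_k(x - y) dy`. -/
noncomputable def iterDens (u : ℝ → ℝ≥0∞) : ℕ → ℝ → ℝ≥0∞
  | 0 => u
  | k + 1 => fun x => ∫⁻ y : ℝ, u y * iterDens u k (x - y)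

instance convPow_sfinite (ν : Measure ℝ) [SFinite ν] (k : ℕ) : SFinite (convPow ν k) := by
  induction k with
  | zero => show SFinite (Measure.dirac (0:ℝ)); infer_instance
  | succ k ih => show SFinite ((convPow ν k).conv ν); infer_instance

lemma measurable_iterDens {u : ℝ → ℝ≥0∞} (hu : Measurable u) :
    ∀ k, Measurable (iterDens u k)
  | 0 => hu
  | k + 1 => by
    have ih := measurable_iterDens hu k
    have h : Measurable (Function.uncurry fun x y => u y * iterDens u k (x - y)) :=
      (hu.comp measurable_snd).mul (ih.comp (measurable_fst.sub measurable_snd))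
    exact h.lintegral_prod_right'

lemma lintegral_conv' (μ ρ : Measure ℝ) [SFinite μ] [SFinite ρ] {f : ℝ → ℝ≥0∞}
    (hf : Measurable f) :
    ∫⁻ z, f z ∂(μ.conv ρ) = ∫⁻ a, ∫⁻ b, f (a + b) ∂ρ ∂μ := by
  rw [Measure.conv, lintegral_map hf measurable_add]
  exact lintegral_prod _ (hf.comp measurable_add).aemeasurable

lemma convPow_one (ν : Measure ℝ) [SFinite ν] : convPow ν 1 = ν := by
  show (Measure.dirac (0:ℝ)).conv ν = ν
  exact Measure.dirac_zero_conv ν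

/-- The iterated density as an integral against the convolution power. -/
lemma iterDens_eq {ν : Measure ℝ} {u : ℝ → ℝ≥0∞} (hu : Measurable u)
    (hν : ν = MeasureTheory.volume.withDensity u) :
    ∀ (k : ℕ) (x : ℝ), iterDens u k x = ∫⁻ s, u (x - s) ∂(convPow ν k)
  | 0, x => by
    show u x = ∫⁻ s, u (x - s) ∂(Measure.dirac 0)
    have hm : Measurable fun s : ℝ => u (x - s) := hu.comp (measurable_id.const_sub x)
    rw [lintegral_dirac' _ hm]
    simp
  | k + 1, x => by
    haveI : SFinite ν := by rw [hν]; infer_instance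
    have ih := iterDens_eq hu hν k
    have hDk := measurable_iterDens hu k
    calc iterDens u (k + 1) x = ∫⁻ y, u y * iterDens u k (x - y) := rfl
      _ = ∫⁻ y, iterDens u k (x - y) ∂ν := by
          have hm : Measurable fun y : ℝ => iterDens u k (x - y) :=
            hDk.comp (measurable_id.const_sub x)
          rw [hν, lintegral_withDensity_eq_lintegral_mul volume hu hm]
          rfl
      _ = ∫⁻ y, ∫⁻ s, u (x - (y + s)) ∂(convPow ν k) ∂ν := by
          refine lintegral_congr fun y => ?_
          rw [ih (x - y)]
          refine lintegral_congr fun s => ?_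
          congr 1
          ring
      _ = ∫⁻ z, u (x - z) ∂(ν.conv (convPow ν k)) := by
          have hm : Measurable fun z : ℝ => u (x - z) := hu.comp (measurable_id.const_sub x)
          rw [lintegral_conv' _ _ hm]
      _ = ∫⁻ z, u (x - z) ∂((convPow ν k).conv ν) := by rw [Measure.conv_comm]
      _ = ∫⁻ s, u (x - s) ∂(convPow ν (k + 1)) := rfl

/-- Part 1: the convolution powers have the iterated densities as densities. -/
lemma convPow_succ_eq {ν : Measure ℝ} {u : ℝ → ℝ≥0∞} (hu : Measurable u)
    (hν : ν = MeasureTheory.volume.withDensity u) (k : ℕ) :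
    convPow ν (k + 1) = MeasureTheory.volume.withDensity (iterDens u k) := by
  haveI : SFinite ν := by rw [hν]; infer_instance
  have hDk := measurable_iterDens hu k
  ext s hs
  rw [withDensity_apply _ hs]
  have hind : Measurable fun z : ℝ => s.indicator (fun _ => (1:ℝ≥0∞)) z :=
    measurable_const.indicator hs
  have h1 : ∫⁻ z, s.indicator (fun _ => (1:ℝ≥0∞)) z ∂((convPow ν k).conv ν)
      = convPow ν (k + 1) s := by
    rw [lintegral_indicator_const hs, one_mul]
    rfl
  rw [← h1, lintegral_conv' _ _ hind]
  have h2 : ∀ t : ℝ, ∫⁻ b, s.indicator (fun _ => (1:ℝ≥0∞)) (t + b) ∂ν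
      = ∫⁻ z, u (z - t) * s.indicator (fun _ => (1:ℝ≥0∞)) z := by
    intro t
    have hm : Measurable fun b : ℝ => s.indicator (fun _ => (1:ℝ≥0∞)) (t + b) :=
      hind.comp (measurable_const_add t)
    rw [hν, lintegral_withDensity_eq_lintegral_mul volume hu hm]
    have := lintegral_add_left_eq_self (μ := volume)
      (fun z => u (z - t) * s.indicator (fun _ => (1:ℝ≥0∞)) z) t
    rw [← this]
    refine lintegral_congr fun b => ?_
    simp [Pi.mul_apply, add_sub_cancel_left]
  calc ∫⁻ t, ∫⁻ b, s.indicator (fun _ => (1:ℝ≥0∞)) (t + b) ∂ν ∂(convPow ν k)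
      = ∫⁻ t, ∫⁻ z, u (z - t) * s.indicator (fun _ => (1:ℝ≥0∞)) z ∂volume ∂(convPow ν k) :=
        lintegral_congr h2
    _ = ∫⁻ z, ∫⁻ t, u (z - t) * s.indicator (fun _ => (1:ℝ≥0∞)) z ∂(convPow ν k) ∂volume := by
        refine lintegral_lintegral_swap ?_
        exact ((hu.comp (measurable_snd.sub measurable_fst)).mul
          (hind.comp measurable_snd)).aemeasurable
    _ = ∫⁻ z, iterDens u k z * s.indicator (fun _ => (1:ℝ≥0∞)) z ∂volume := by
        refine lintegral_congr fun z => ?_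
        have hm : Measurable fun t : ℝ => u (z - t) := hu.comp (measurable_id.const_sub z)
        rw [lintegral_mul_const _ hm, ← iterDens_eq hu hν k z]
    _ = ∫⁻ z in s, iterDens u k z ∂volume := by
        rw [← lintegral_indicator hs]
        refine lintegral_congr fun z => ?_
        by_cases h : z ∈ s
        · simp [Set.indicator_of_mem h]
        · simp [Set.indicator_of_notMem h]

lemma lintegral_reflect (g : ℝ → ℝ≥0∞) (hg : Measurable g) (w : ℝ) :
    ∫⁻ t, g (w - t) = ∫⁻ z, g z := by
  calc ∫⁻ t, g (w - t) = ∫⁻ t, (fun z => g (w + z)) (-t) := by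
        refine lintegral_congr fun t => ?_; simp [sub_eq_add_neg]
    _ = ∫⁻ t, g (w + t) :=
        (Measure.measurePreserving_neg (volume : Measure ℝ)).lintegral_comp
          (hg.comp (measurable_const_add w))
    _ = ∫⁻ z, g z := lintegral_add_left_eq_self g w

lemma key_reflect (D : ℝ → ℝ≥0∞) (hD : Measurable D) {A : Set ℝ} (hA : MeasurableSet A)
    {w c : ℝ} (himp : ∀ t ∈ A, c < w - t) :
    ∫⁻ t, A.indicator (fun t => D (w - t)) t ≤ (volume.withDensity D) (Ioi c) := by
  have hA' : MeasurableSet ((fun z => w - z) ⁻¹' A) := (measurable_id.const_sub w) hA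
  have hfun : (fun t => A.indicator (fun t => D (w - t)) t)
      = fun t => ((fun z => w - z) ⁻¹' A).indicator D (w - t) := by
    funext t
    by_cases h : t ∈ A
    · have h2 : w - t ∈ (fun z => w - z) ⁻¹' A := by simp [Set.mem_preimage, h]
      simp [Set.indicator_of_mem h, Set.indicator_of_mem h2]
    · have h2 : w - t ∉ (fun z => w - z) ⁻¹' A := by simp [Set.mem_preimage, h]
      simp [Set.indicator_of_notMem h, Set.indicator_of_notMem h2]
  rw [hfun, lintegral_reflect _ (hD.indicator hA') w]
  have hsub : ((fun z => w - z) ⁻¹' A) ⊆ Ioi c := by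
    intro z hz
    have := himp (w - z) hz
    simp only [mem_Ioi]
    linarith [this]
  calc ∫⁻ z, ((fun z => w - z) ⁻¹' A).indicator D z
      ≤ ∫⁻ z, (Ioi c).indicator D z :=
        lintegral_mono fun z => Set.indicator_le_indicator_of_subset hsub (fun a => zero_le) z
    _ = (volume.withDensity D) (Ioi c) := by
        rw [lintegral_indicator measurableSet_Ioi, withDensity_apply _ measurableSet_Ioi]

lemma conv_Ioi (μ ρ : Measure ℝ) [SFinite μ] [SFinite ρ] (c : ℝ) :
    (μ.conv ρ) (Ioi c) = ∫⁻ y, ρ (Ioi (c - y)) ∂μ := by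
  have h1 : ∫⁻ z, (Ioi c).indicator (fun _ => (1:ℝ≥0∞)) z ∂(μ.conv ρ) = (μ.conv ρ) (Ioi c) := by
    rw [lintegral_indicator_const measurableSet_Ioi, one_mul]
  rw [← h1, lintegral_conv' _ _ (measurable_const.indicator measurableSet_Ioi)]
  refine lintegral_congr fun y => ?_
  have h2 : ∫⁻ t, (Ioi (c - y)).indicator (fun _ => (1:ℝ≥0∞)) t ∂ρ = ρ (Ioi (c - y)) := by
    rw [lintegral_indicator_const measurableSet_Ioi, one_mul]
  rw [← h2]
  refine lintegral_congr fun t => ?_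
  by_cases h : c - y < t
  · have hm : c < y + t := by linarith
    rw [Set.indicator_of_mem (mem_Ioi.mpr hm), Set.indicator_of_mem (mem_Ioi.mpr h)]
  · have hm : ¬ c < y + t := fun hc => h (by linarith)
    rw [Set.indicator_of_notMem (fun hx => hm (mem_Ioi.mp hx)),
      Set.indicator_of_notMem (fun hx => h (mem_Ioi.mp hx))]

/-- The key recursive estimate (cycle-lemma style induction). -/
lemma diamond {ν : Measure ℝ} {u : ℝ → ℝ≥0∞} {C : ℝ≥0∞} (hu : Measurable u)
    (hν : ν = MeasureTheory.volume.withDensity u) (hC : C ≠ ⊤)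
    (hbound : ∀ x : ℝ, u x ≤ C) (N : ℕ) (hN : 1 ≤ N) (x : ℝ) :
    ∀ j : ℕ, 1 ≤ j → ∀ w : ℝ,
      ∫⁻ t, ({t : ℝ | (N : ℝ) * t < (j : ℝ) * min 0 x}.indicator (fun t => u (w - t)) t)
          ∂(convPow ν j)
        ≤ (j : ℝ≥0∞) * C * (convPow ν j) (Ioi (min 0 x - x + w)) := by
  haveI : SFinite ν := by rw [hν]; infer_instance
  set m : ℝ := min 0 x with hm
  have hm0 : m ≤ 0 := min_le_left 0 x
  have hmx : m ≤ x := min_le_right 0 x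
  have hN1 : (1 : ℝ) ≤ (N : ℝ) := by exact_mod_cast hN
  have hAmeas : ∀ r : ℝ, MeasurableSet {t : ℝ | (N : ℝ) * t < r} :=
    fun r => measurableSet_lt (measurable_id.const_mul _) measurable_const
  have harith : ∀ w' : ℝ, ∀ t ∈ {t : ℝ | (N : ℝ) * t < m}, m - x + w' < w' - t := by
    intro w' t ht
    simp only [Set.mem_setOf_eq] at ht
    have ht0 : t < 0 := by nlinarith
    have hmx' : m - x ≤ 0 := by linarith
    linarith
  intro j
  induction j with
  | zero => intro h; omega
  | succ j ih =>
    intro _ w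
    rcases Nat.eq_zero_or_pos j with hj0 | hj1
    · -- base case j + 1 = 1
      subst hj0
      rw [convPow_one ν]
      have hset : {t : ℝ | (N : ℝ) * t < ((0 + 1 : ℕ) : ℝ) * m} = {t : ℝ | (N : ℝ) * t < m} := by
        ext t; norm_num
      rw [hset]
      have hindm : Measurable fun t : ℝ =>
          {t : ℝ | (N : ℝ) * t < m}.indicator (fun t => u (w - t)) t :=
        (hu.comp (measurable_id.const_sub w)).indicator (hAmeas m)
      calc ∫⁻ t, ({t : ℝ | (N : ℝ) * t < m}.indicator (fun t => u (w - t)) t) ∂ν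
          = ∫⁻ t, u t * ({t : ℝ | (N : ℝ) * t < m}.indicator (fun t => u (w - t)) t) := by
            rw [hν, lintegral_withDensity_eq_lintegral_mul volume hu hindm]
            rfl
        _ ≤ ∫⁻ t, C * ({t : ℝ | (N : ℝ) * t < m}.indicator (fun t => u (w - t)) t) :=
            lintegral_mono fun t => mul_le_mul_left (hbound t) _
        _ = C * ∫⁻ t, ({t : ℝ | (N : ℝ) * t < m}.indicator (fun t => u (w - t)) t) :=
            lintegral_const_mul' _ _ hC
        _ ≤ C * (volume.withDensity u) (Ioi (m - x + w)) :=
            mul_le_mul_right (key_reflect u hu (hAmeas m) (harith w)) _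
        _ = ((0 + 1 : ℕ) : ℝ≥0∞) * C * ν (Ioi (m - x + w)) := by
            rw [← hν]; norm_num
    · -- inductive step: j ≥ 1, prove for j + 1
      have ihj := ih hj1
      have hDj := measurable_iterDens hu j
      have hconv : convPow ν (j + 1) = ν.conv (convPow ν j) := by
        show (convPow ν j).conv ν = _
        rw [Measure.conv_comm]
      set c : ℝ := m - x + w with hc
      set B : Set ℝ := {y : ℝ | (N : ℝ) * y < m} with hB
      set Aj : Set ℝ := {t : ℝ | (N : ℝ) * t < (j : ℝ) * m} with hAj
      have hpoint : ∀ y t : ℝ,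
          ({t : ℝ | (N : ℝ) * t < ((j + 1 : ℕ) : ℝ) * m}.indicator (fun t => u (w - t)) (y + t))
            ≤ B.indicator (fun _ => (1 : ℝ≥0∞)) y * u (w - y - t)
              + Aj.indicator (fun t => u (w - y - t)) t := by
        intro y t
        by_cases h : (y + t) ∈ {t : ℝ | (N : ℝ) * t < ((j + 1 : ℕ) : ℝ) * m}
        · rw [Set.indicator_of_mem h]
          have hj1' : (1 : ℝ) ≤ (j : ℝ) := by exact_mod_cast hj1
          have h' : (N : ℝ) * (y + t) < ((j : ℝ) + 1) * m := by
            have h2 := h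
            simp only [Set.mem_setOf_eq] at h2
            push_cast at h2
            linarith
          have heq : w - (y + t) = w - y - t := by ring
          rw [heq]
          rcases le_or_gt ((j : ℝ) * y) t with hbr | hbr
          · -- branch 1 : N y < m
            have hy : (N : ℝ) * y < m := by nlinarith
            have hmem : y ∈ B := hy
            have h1 : B.indicator (fun _ => (1 : ℝ≥0∞)) y = 1 := Set.indicator_of_mem hmem _
            rw [h1, one_mul]
            exact self_le_add_right _ _
          · -- branch 2 : N t < j m
            have ht : (N : ℝ) * t < (j : ℝ) * m := by nlinarith
            have hmem : t ∈ Aj := ht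
            have h1 : Aj.indicator (fun t => u (w - y - t)) t = u (w - y - t) :=
              Set.indicator_of_mem hmem _
            rw [h1]
            exact self_le_add_left _ _
        · rw [Set.indicator_of_notMem h]
          exact zero_le
      have hG1 : Measurable fun y : ℝ =>
          B.indicator (fun _ => (1 : ℝ≥0∞)) y * iterDens u j (w - y) :=
        (measurable_const.indicator (hAmeas m)).mul (hDj.comp (measurable_id.const_sub w))
      have hindm : Measurable fun t : ℝ =>
          {t : ℝ | (N : ℝ) * t < ((j + 1 : ℕ) : ℝ) * m}.indicator (fun t => u (w - t)) t :=
        (hu.comp (measurable_id.const_sub w)).indicator (hAmeas _)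
      calc ∫⁻ t, ({t : ℝ | (N : ℝ) * t < ((j + 1 : ℕ) : ℝ) * m}.indicator
              (fun t => u (w - t)) t) ∂(convPow ν (j + 1))
          = ∫⁻ y, ∫⁻ t, ({t : ℝ | (N : ℝ) * t < ((j + 1 : ℕ) : ℝ) * m}.indicator
              (fun t => u (w - t)) (y + t)) ∂(convPow ν j) ∂ν := by
            rw [hconv, lintegral_conv' _ _ hindm]
        _ ≤ ∫⁻ y, ∫⁻ t, (B.indicator (fun _ => (1 : ℝ≥0∞)) y * u (w - y - t)
              + Aj.indicator (fun t => u (w - y - t)) t) ∂(convPow ν j) ∂ν :=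
            lintegral_mono fun y => lintegral_mono fun t => hpoint y t
        _ = ∫⁻ y, (B.indicator (fun _ => (1 : ℝ≥0∞)) y * iterDens u j (w - y)
              + ∫⁻ t, Aj.indicator (fun t => u (w - y - t)) t ∂(convPow ν j)) ∂ν := by
            refine lintegral_congr fun y => ?_
            have hm1 : Measurable fun t : ℝ => u (w - y - t) :=
              hu.comp (measurable_id.const_sub (w - y))
            rw [lintegral_add_left (f := fun t => B.indicator (fun _ => (1 : ℝ≥0∞)) y * u (w - y - t)) (measurable_const.mul hm1)]
            congr 1
            rw [lintegral_const_mul _ hm1, ← iterDens_eq hu hν j (w - y)]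
        _ ≤ (∫⁻ y, B.indicator (fun _ => (1 : ℝ≥0∞)) y * iterDens u j (w - y) ∂ν)
              + ∫⁻ y, (j : ℝ≥0∞) * C * (convPow ν j) (Ioi (m - x + (w - y))) ∂ν := by
            rw [← lintegral_add_left' hG1.aemeasurable]
            exact lintegral_mono fun y => add_le_add_right (ihj (w - y)) _
        _ ≤ C * (convPow ν (j + 1)) (Ioi c) + (j : ℝ≥0∞) * C * (convPow ν (j + 1)) (Ioi c) := by
            refine add_le_add ?_ ?_
            · -- Term A
              calc ∫⁻ y, B.indicator (fun _ => (1 : ℝ≥0∞)) y * iterDens u j (w - y) ∂ν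
                  = ∫⁻ y, u y * (B.indicator (fun _ => (1 : ℝ≥0∞)) y
                      * iterDens u j (w - y)) := by
                    rw [hν, lintegral_withDensity_eq_lintegral_mul volume hu hG1]
                    rfl
                _ ≤ ∫⁻ y, C * (B.indicator (fun _ => (1 : ℝ≥0∞)) y * iterDens u j (w - y)) :=
                    lintegral_mono fun y => mul_le_mul_left (hbound y) _
                _ = C * ∫⁻ y, B.indicator (fun _ => (1 : ℝ≥0∞)) y * iterDens u j (w - y) :=
                    lintegral_const_mul' _ _ hC
                _ = C * ∫⁻ y, B.indicator (fun y => iterDens u j (w - y)) y := by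
                    congr 1
                    refine lintegral_congr fun y => ?_
                    by_cases h : y ∈ B
                    · simp [Set.indicator_of_mem h]
                    · simp [Set.indicator_of_notMem h]
                _ ≤ C * (volume.withDensity (iterDens u j)) (Ioi c) :=
                    mul_le_mul_right (key_reflect _ hDj (hAmeas m) (harith w)) _
                _ = C * (convPow ν (j + 1)) (Ioi c) := by
                    rw [← convPow_succ_eq hu hν j]
            · -- Term B
              have hjC : (j : ℝ≥0∞) * C ≠ ⊤ :=
                ENNReal.mul_ne_top (ENNReal.natCast_ne_top j) hC
              refine le_of_eq ?_
              calc ∫⁻ y, (j : ℝ≥0∞) * C * (convPow ν j) (Ioi (m - x + (w - y))) ∂ν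
                  = (j : ℝ≥0∞) * C * ∫⁻ y, (convPow ν j) (Ioi (c - y)) ∂ν := by
                    rw [lintegral_const_mul' _ _ hjC]
                    congr 1
                    refine lintegral_congr fun y => ?_
                    congr 2
                    rw [hc]; ring_nf
                _ = (j : ℝ≥0∞) * C * (ν.conv (convPow ν j)) (Ioi c) := by
                    rw [conv_Ioi]
                _ = (j : ℝ≥0∞) * C * (convPow ν (j + 1)) (Ioi c) := by rw [hconv]
        _ = ((j + 1 : ℕ) : ℝ≥0∞) * C * (convPow ν (j + 1)) (Ioi c) := by
            push_cast
            ring_nf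

/-- If `ν` has density `u ≤ C < ∞` w.r.t. Lebesgue measure, then for every `k ≥ 1` the
function `u_k` is a density of `ν^{*k}` and `u_k(x) ≤ k C ν^{*(k-1)}((min{0,x}, ∞))`,
where for `k = 1` the right-hand side is interpreted as `C`.
(Here `iterDens u k = u_{k+1}`.) -/
theorem iterDens_bound (ν : Measure ℝ) (u : ℝ → ℝ≥0∞) (hu : Measurable u)
    (hν : ν = MeasureTheory.volume.withDensity u)
    (C : ℝ≥0∞) (hC : C ≠ ⊤) (hbound : ∀ x : ℝ, u x ≤ C) :
    (∀ k : ℕ, convPow ν (k + 1) = MeasureTheory.volume.withDensity (iterDens u k)) ∧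
    (∀ x : ℝ, iterDens u 0 x ≤ C) ∧
    (∀ k : ℕ, ∀ x : ℝ, iterDens u (k + 1) x ≤
      ((k + 2 : ℕ) : ℝ≥0∞) * C * convPow ν (k + 1) (Set.Ioi (min 0 x))) := by
  haveI : SFinite ν := by rw [hν]; infer_instance
  refine ⟨convPow_succ_eq hu hν, fun x => hbound x, ?_⟩
  intro k x
  have hm0 : min 0 x ≤ 0 := min_le_left 0 x
  set N : ℕ := k + 1 with hNdef
  have hN : 1 ≤ N := Nat.le_add_left 1 k
  have hNpos : (0 : ℝ) < (N : ℝ) := by positivity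
  have hsing : convPow ν N {min 0 x} = 0 := by
    rw [hNdef, convPow_succ_eq hu hν k, withDensity_apply _ (measurableSet_singleton _)]
    exact setLIntegral_measure_zero _ _ (measure_singleton _)
  have hIci : convPow ν N (Ici (min 0 x)) ≤ convPow ν N (Ioi (min 0 x)) := by
    have h1 : Ici (min 0 x) ⊆ Ioi (min 0 x) ∪ {min 0 x} := by
      intro z hz
      rcases eq_or_lt_of_le (mem_Ici.mp hz) with h | h
      · exact Or.inr (by simp [← h])
      · exact Or.inl h
    calc convPow ν N (Ici (min 0 x)) ≤ convPow ν N (Ioi (min 0 x) ∪ {min 0 x}) :=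
          measure_mono h1
      _ ≤ convPow ν N (Ioi (min 0 x)) + convPow ν N {min 0 x} := measure_union_le _ _
      _ = convPow ν N (Ioi (min 0 x)) := by rw [hsing, add_zero]
  have hpoint : ∀ s : ℝ, u (x - s) ≤
      ({t : ℝ | (N : ℝ) * t < (N : ℝ) * min 0 x}.indicator (fun t => u (x - t)) s)
        + (Ici (min 0 x)).indicator (fun _ => C) s := by
    intro s
    by_cases h : s < min 0 x
    · have h1 : s ∈ {t : ℝ | (N : ℝ) * t < (N : ℝ) * min 0 x} := by
        simp only [Set.mem_setOf_eq]
        nlinarith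
      rw [Set.indicator_of_mem h1]
      exact self_le_add_right _ _
    · have h2 : s ∈ Ici (min 0 x) := not_lt.mp h
      rw [Set.indicator_of_mem h2]
      exact le_add_left (hbound _)
  have hAmeas : MeasurableSet {t : ℝ | (N : ℝ) * t < (N : ℝ) * min 0 x} :=
    measurableSet_lt (measurable_id.const_mul _) measurable_const
  calc iterDens u (k + 1) x = ∫⁻ s, u (x - s) ∂(convPow ν N) := iterDens_eq hu hν N x
    _ ≤ ∫⁻ s, (({t : ℝ | (N : ℝ) * t < (N : ℝ) * min 0 x}.indicator (fun t => u (x - t)) s)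
          + (Ici (min 0 x)).indicator (fun _ => C) s) ∂(convPow ν N) := lintegral_mono hpoint
    _ = (∫⁻ s, ({t : ℝ | (N : ℝ) * t < (N : ℝ) * min 0 x}.indicator (fun t => u (x - t)) s)
            ∂(convPow ν N))
          + ∫⁻ s, (Ici (min 0 x)).indicator (fun _ => C) s ∂(convPow ν N) := by
        have hm1 : Measurable fun s : ℝ =>
            {t : ℝ | (N : ℝ) * t < (N : ℝ) * min 0 x}.indicator (fun t => u (x - t)) s :=
          (hu.comp (measurable_id.const_sub x)).indicator hAmeas
        rw [lintegral_add_left hm1]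
    _ ≤ (N : ℝ≥0∞) * C * convPow ν N (Ioi (min 0 x)) + C * convPow ν N (Ioi (min 0 x)) := by
        refine add_le_add ?_ ?_
        · have hd := diamond hu hν hC hbound N hN x N hN x
          have harg : min 0 x - x + x = min 0 x := by ring
          rw [harg] at hd
          exact hd
        · rw [lintegral_indicator_const measurableSet_Ici]
          exact mul_le_mul_right hIci C
    _ = ((k + 2 : ℕ) : ℝ≥0∞) * C * convPow ν (k + 1) (Ioi (min 0 x)) := by
        rw [hNdef]
        push_cast
        ring_nf
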